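/- Let a_0(n), a_1(n) be real sequences with 2a_0(n) + a_1(n) = 1 for all n, and suppose L_1 := lim_{n→∞} a_1(n) exists. Let f : [0,1] → ℝ be twice continuously differentiable and x ∈ [0,1]. Then lim_{n→∞} n·(B_n^{M,1}(f;x) − f(x)) = (x(1−x)/2) f″(x) + ((1−2x)/2)(1 + L_1) f′(x). -/

import Mathlib

open scoped BigOperators
open Set Filter MeasureTheory

/-- Bernstein fundamental function `p_{n,k}` (vanishes for `k > n` since `choose = 0`). -/
noncomputable def bp (n k : ℕ) (x : ℝ) : ℝ :=
  (n.choose k : ℝ) * x ^ k * (1 - x) ^ (n - k)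

/-- Bernstein fundamental function with integer index, vanishing for negative `k`. -/
noncomputable def bpz (n : ℕ) (k : ℤ) (x : ℝ) : ℝ :=
  if 0 ≤ k then bp n k.toNat x else 0

/-- The classical Bernstein operator `B_n`. -/
noncomputable def Bern (n : ℕ) (f : ℝ → ℝ) (x : ℝ) : ℝ :=
  ∑ k ∈ Finset.range (n + 1), bp n k x * f (k / n)

/-- Modified fundamental function `p_{n,k}^{M,1}` with `a(x,n) = a1*x + a0`. -/
noncomputable def bpM1 (a0 a1 : ℝ) (n k : ℕ) (x : ℝ) : ℝ :=
  (a1 * x + a0) * bp (n - 1) k x + (a1 * (1 - x) + a0) * bpz (n - 1) ((k : ℤ) - 1) x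

/-- The modified Bernstein operator `B_n^{M,1}`. -/
noncomputable def BernM1 (a0 a1 : ℝ) (n : ℕ) (f : ℝ → ℝ) (x : ℝ) : ℝ :=
  ∑ k ∈ Finset.range (n + 1), bpM1 a0 a1 n k x * f (k / n)

/-- Second modified fundamental function `p_{n,k}^{M,2}`. -/
noncomputable def bpM2 (n k : ℕ) (x : ℝ) : ℝ :=
  ((n : ℝ) / 2 * x ^ 2 + (-1 - (n : ℝ) / 2) * x + 1) * bp (n - 2) k x
    + (n : ℝ) * x * (1 - x) * bpz (n - 2) ((k : ℤ) - 1) x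
    + ((n : ℝ) / 2 * x ^ 2 + (-(n : ℝ) / 2 + 1) * x) * bpz (n - 2) ((k : ℤ) - 2) x

/-- The second modified Bernstein operator `B_n^{M,2}`. -/
noncomputable def BernM2 (n : ℕ) (f : ℝ → ℝ) (x : ℝ) : ℝ :=
  ∑ k ∈ Finset.range (n + 1), bpM2 n k x * f (k / n)

/-- The Kantorovich operator `K_n`. -/
noncomputable def Kan (n : ℕ) (f : ℝ → ℝ) (x : ℝ) : ℝ :=
  ((n : ℝ) + 1) * ∑ k ∈ Finset.range (n + 1),
    bp n k x * ∫ t in ((k : ℝ) / (n + 1))..(((k : ℝ) + 1) / (n + 1)), f t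

/-- The modified Kantorovich operator `K_n^{M,1}`. -/
noncomputable def KanM1 (a0 a1 : ℝ) (n : ℕ) (f : ℝ → ℝ) (x : ℝ) : ℝ :=
  ((n : ℝ) + 1) * ∑ k ∈ Finset.range (n + 1),
    bpM1 a0 a1 n k x * ∫ t in ((k : ℝ) / (n + 1))..(((k : ℝ) + 1) / (n + 1)), f t

/-- The Durrmeyer operator `D_n`. -/
noncomputable def Dur (n : ℕ) (f : ℝ → ℝ) (x : ℝ) : ℝ :=
  ((n : ℝ) + 1) * ∑ k ∈ Finset.range (n + 1),
    bp n k x * ∫ t in (0:ℝ)..1, bp n k t * f t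

/-- The modified Durrmeyer operator `D_n^{M,1}`. -/
noncomputable def DurM1 (a0 a1 : ℝ) (n : ℕ) (f : ℝ → ℝ) (x : ℝ) : ℝ :=
  ((n : ℝ) + 1) * ∑ k ∈ Finset.range (n + 1),
    bpM1 a0 a1 n k x * ∫ t in (0:ℝ)..1, bp n k t * f t

/-- The genuine Bernstein–Durrmeyer operator `U_n`. -/
noncomputable def Gen (n : ℕ) (f : ℝ → ℝ) (x : ℝ) : ℝ :=
  (1 - x) ^ n * f 0 + x ^ n * f 1 +
    ((n : ℝ) - 1) * ∑ k ∈ Finset.Icc 1 (n - 1),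
      bp n k x * ∫ t in (0:ℝ)..1, bp (n - 2) (k - 1) t * f t

/-- The modified genuine Bernstein–Durrmeyer operator `U_n^{M,1}`. -/
noncomputable def GenM1 (a0 a1 : ℝ) (n : ℕ) (f : ℝ → ℝ) (x : ℝ) : ℝ :=
  (a1 * x + a0) * (1 - x) ^ (n - 1) * f 0 + (a1 * (1 - x) + a0) * x ^ (n - 1) * f 1 +
    ((n : ℝ) - 1) * ∑ k ∈ Finset.Icc 1 (n - 1),
      bpM1 a0 a1 n k x * ∫ t in (0:ℝ)..1, bp (n - 2) (k - 1) t * f t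

/-- First modulus of continuity on `[0,1]`. -/
noncomputable def omega1 (f : ℝ → ℝ) (δ : ℝ) : ℝ :=
  sSup {y | ∃ s t : ℝ, s ∈ Icc (0:ℝ) 1 ∧ t ∈ Icc (0:ℝ) 1 ∧ |s - t| ≤ δ ∧ y = |f s - f t|}

/-- Second modulus of smoothness on `[0,1]`. -/
noncomputable def omega2 (f : ℝ → ℝ) (δ : ℝ) : ℝ :=
  sSup {y | ∃ t h : ℝ, 0 < h ∧ h ≤ δ ∧ t - h ∈ Icc (0:ℝ) 1 ∧ t + h ∈ Icc (0:ℝ) 1 ∧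
    y = |f (t + h) - 2 * f t + f (t - h)|}

/-- Sup norm on `[0,1]`. -/
noncomputable def supNorm (g : ℝ → ℝ) : ℝ :=
  sSup {y | ∃ t ∈ Icc (0:ℝ) 1, y = |g t|}

lemma sum_bp (m : ℕ) (x : ℝ) : ∑ k ∈ Finset.range (m + 1), bp m k x = 1 := by
  have h := add_pow x (1 - x) m
  simp only [add_sub_cancel, one_pow] at h
  calc ∑ k ∈ Finset.range (m + 1), bp m k x
      = ∑ k ∈ Finset.range (m + 1), x ^ k * (1 - x) ^ (m - k) * (m.choose k : ℝ) :=
        Finset.sum_congr rfl fun k _ => by unfold bp; ring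
    _ = 1 := by rw [← h]

lemma sum_desc (m j : ℕ) (hj : j ≤ m) (x : ℝ) :
    ∑ k ∈ Finset.range (m + 1), (k.descFactorial j : ℝ) * bp m k x
      = (m.descFactorial j : ℝ) * x ^ j := by
  have key : ∀ i : ℕ, i ≤ m - j →
      ((j + i).descFactorial j : ℝ) * bp m (j + i) x
        = (m.descFactorial j : ℝ) * x ^ j * bp (m - j) i x := by
    intro i hi
    have h1 : (j + i).descFactorial j * m.choose (j + i) = m.descFactorial j * (m - j).choose i := by
      have hkn : j + i ≤ m := by omega
      have hc := Nat.choose_mul (n := m) (Nat.le_add_right j i)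
      rw [Nat.descFactorial_eq_factorial_mul_choose, Nat.descFactorial_eq_factorial_mul_choose]
      rw [show j + i - j = i by omega] at hc
      rw [Nat.mul_assoc, Nat.mul_assoc]
      congr 1
      rw [Nat.mul_comm, hc, Nat.mul_comm]
    have h1' : ((j + i).descFactorial j : ℝ) * (m.choose (j + i) : ℝ)
        = (m.descFactorial j : ℝ) * ((m - j).choose i : ℝ) := by exact_mod_cast congrArg Nat.cast h1
    unfold bp
    rw [show m - (j + i) = m - j - i by omega]
    calc ((j + i).descFactorial j : ℝ) * ((m.choose (j+i) : ℝ) * x ^ (j + i) * (1-x) ^ (m - j - i))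
        = (((j + i).descFactorial j : ℝ) * (m.choose (j + i) : ℝ)) * (x ^ (j+i) * (1-x) ^ (m-j-i)) := by ring
      _ = ((m.descFactorial j : ℝ) * ((m - j).choose i : ℝ)) * (x ^ (j+i) * (1-x) ^ (m-j-i)) := by rw [h1']
      _ = (m.descFactorial j : ℝ) * x ^ j * ((((m-j).choose i : ℝ)) * x ^ i * (1-x) ^ (m-j-i)) := by rw [pow_add]; ring
  rw [Finset.range_eq_Ico, ← Finset.sum_Ico_consecutive _ (Nat.zero_le j) (by omega : j ≤ m + 1)]
  have hz : ∑ k ∈ Finset.Ico 0 j, (k.descFactorial j : ℝ) * bp m k x = 0 := by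
    apply Finset.sum_eq_zero
    intro k hk
    simp only [Finset.mem_Ico] at hk
    rw [Nat.descFactorial_eq_zero_iff_lt.2 hk.2]
    simp
  rw [hz, zero_add, Finset.sum_Ico_eq_sum_range]
  rw [show m + 1 - j = (m - j) + 1 by omega]
  have : ∑ i ∈ Finset.range (m - j + 1), ((j + i).descFactorial j : ℝ) * bp m (j + i) x
      = ∑ i ∈ Finset.range (m - j + 1), (m.descFactorial j : ℝ) * x ^ j * bp (m - j) i x := by
    apply Finset.sum_congr rfl
    intro i hi
    exact key i (by simp at hi; omega)
  rw [this, ← Finset.mul_sum, sum_bp, mul_one]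

lemma cd1 (k : ℕ) : (k.descFactorial 1 : ℝ) = k := by simp

lemma cd2 (k : ℕ) : (k.descFactorial 2 : ℝ) = k * (k - 1) := by
  rcases k with _ | k
  · simp
  · simp [Nat.descFactorial_succ, Nat.descFactorial_one]
    push_cast; ring

lemma cd3 (k : ℕ) : (k.descFactorial 3 : ℝ) = k * (k - 1) * (k - 2) := by
  rcases k with _ | _ | k
  · simp
  · simp [Nat.descFactorial]
  · simp [Nat.descFactorial_succ, Nat.descFactorial_one]
    push_cast; ring

lemma cd4 (k : ℕ) : (k.descFactorial 4 : ℝ) = k * (k - 1) * (k - 2) * (k - 3) := by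
  rcases k with _ | _ | _ | k
  · simp
  · simp [Nat.descFactorial]
  · simp [Nat.descFactorial]
  · simp [Nat.descFactorial_succ, Nat.descFactorial_one]
    push_cast; ring

lemma mom1 (m : ℕ) (hm : 4 ≤ m) (x : ℝ) :
    ∑ k ∈ Finset.range (m + 1), ((k : ℝ) - m * x) * bp m k x = 0 := by
  have e1 := sum_desc m 1 (by omega) x
  have e0 := sum_bp m x
  calc ∑ k ∈ Finset.range (m + 1), ((k : ℝ) - m * x) * bp m k x
      = ∑ k ∈ Finset.range (m + 1),
          ((k.descFactorial 1 : ℝ) * bp m k x + (-(m * x)) * bp m k x) :=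
        Finset.sum_congr rfl fun k _ => by rw [cd1]; ring
    _ = (∑ k ∈ Finset.range (m + 1), (k.descFactorial 1 : ℝ) * bp m k x)
          + (-(m * x)) * ∑ k ∈ Finset.range (m + 1), bp m k x := by
        rw [Finset.sum_add_distrib, Finset.mul_sum]
    _ = 0 := by rw [e1, e0, cd1]; ring

lemma mom2 (m : ℕ) (hm : 4 ≤ m) (x : ℝ) :
    ∑ k ∈ Finset.range (m + 1), ((k : ℝ) - m * x) ^ 2 * bp m k x = m * x * (1 - x) := by
  have e1 := sum_desc m 1 (by omega) x
  have e2 := sum_desc m 2 (by omega) x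
  have e0 := sum_bp m x
  set c : ℝ := (m : ℝ) * x with hc
  calc ∑ k ∈ Finset.range (m + 1), ((k : ℝ) - c) ^ 2 * bp m k x
      = ∑ k ∈ Finset.range (m + 1),
          ((k.descFactorial 2 : ℝ) * bp m k x + ((1 - 2*c) * ((k.descFactorial 1 : ℝ) * bp m k x)
            + c ^ 2 * bp m k x)) :=
        Finset.sum_congr rfl fun k _ => by rw [cd1, cd2]; ring
    _ = (∑ k ∈ Finset.range (m + 1), (k.descFactorial 2 : ℝ) * bp m k x)
          + ((1 - 2*c) * ∑ k ∈ Finset.range (m + 1), (k.descFactorial 1 : ℝ) * bp m k x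
            + c ^ 2 * ∑ k ∈ Finset.range (m + 1), bp m k x) := by
        rw [Finset.sum_add_distrib, Finset.sum_add_distrib, Finset.mul_sum, Finset.mul_sum]
    _ = m * x * (1 - x) := by rw [e1, e2, e0, cd1, cd2]; ring

lemma mom4 (m : ℕ) (hm : 4 ≤ m) (x : ℝ) :
    ∑ k ∈ Finset.range (m + 1), ((k : ℝ) - m * x) ^ 4 * bp m k x
      = m * x * (1 - x) * (1 + 3 * ((m : ℝ) - 2) * x * (1 - x)) := by
  have e1 := sum_desc m 1 (by omega) x
  have e2 := sum_desc m 2 (by omega) x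
  have e3 := sum_desc m 3 (by omega) x
  have e4 := sum_desc m 4 (by omega) x
  have e0 := sum_bp m x
  set c : ℝ := (m : ℝ) * x with hc
  calc ∑ k ∈ Finset.range (m + 1), ((k : ℝ) - c) ^ 4 * bp m k x
      = ∑ k ∈ Finset.range (m + 1),
          ((k.descFactorial 4 : ℝ) * bp m k x
            + ((6 - 4*c) * ((k.descFactorial 3 : ℝ) * bp m k x)
            + ((7 - 12*c + 6*c^2) * ((k.descFactorial 2 : ℝ) * bp m k x)
            + ((1 - 4*c + 6*c^2 - 4*c^3) * ((k.descFactorial 1 : ℝ) * bp m k x)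
            + c ^ 4 * bp m k x)))) :=
        Finset.sum_congr rfl fun k _ => by rw [cd1, cd2, cd3, cd4]; ring
    _ = (∑ k ∈ Finset.range (m + 1), (k.descFactorial 4 : ℝ) * bp m k x)
          + ((6 - 4*c) * (∑ k ∈ Finset.range (m + 1), (k.descFactorial 3 : ℝ) * bp m k x)
          + ((7 - 12*c + 6*c^2) * (∑ k ∈ Finset.range (m + 1), (k.descFactorial 2 : ℝ) * bp m k x)
          + ((1 - 4*c + 6*c^2 - 4*c^3) * (∑ k ∈ Finset.range (m + 1), (k.descFactorial 1 : ℝ) * bp m k x)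
          + c ^ 4 * ∑ k ∈ Finset.range (m + 1), bp m k x))) := by
        rw [Finset.sum_add_distrib, Finset.sum_add_distrib, Finset.sum_add_distrib,
          Finset.sum_add_distrib, Finset.mul_sum, Finset.mul_sum, Finset.mul_sum, Finset.mul_sum]
    _ = m * x * (1 - x) * (1 + 3 * ((m : ℝ) - 2) * x * (1 - x)) := by
        rw [e1, e2, e3, e4, e0, cd1, cd2, cd3, cd4]; ring

lemma bp_nonneg (m k : ℕ) {x : ℝ} (hx : x ∈ Icc (0:ℝ) 1) : 0 ≤ bp m k x := by
  obtain ⟨h0, h1⟩ := hx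
  unfold bp
  have : (0:ℝ) ≤ 1 - x := by linarith
  positivity

lemma moms1 (m : ℕ) (hm : 4 ≤ m) (x s : ℝ) :
    ∑ k ∈ Finset.range (m + 1), ((k : ℝ) + s - ((m:ℝ)+1) * x) * bp m k x = s - x := by
  calc ∑ k ∈ Finset.range (m + 1), ((k : ℝ) + s - ((m:ℝ)+1) * x) * bp m k x
      = ∑ k ∈ Finset.range (m + 1),
          (((k : ℝ) - m * x) * bp m k x + (s - x) * bp m k x) :=
        Finset.sum_congr rfl fun k _ => by ring
    _ = (∑ k ∈ Finset.range (m + 1), ((k : ℝ) - m * x) * bp m k x)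
          + (s - x) * ∑ k ∈ Finset.range (m + 1), bp m k x := by
        rw [Finset.sum_add_distrib, Finset.mul_sum]
    _ = s - x := by rw [mom1 m hm, sum_bp]; ring

lemma moms2 (m : ℕ) (hm : 4 ≤ m) (x s : ℝ) :
    ∑ k ∈ Finset.range (m + 1), ((k : ℝ) + s - ((m:ℝ)+1) * x) ^ 2 * bp m k x
      = (m:ℝ) * x * (1 - x) + (s - x) ^ 2 := by
  calc ∑ k ∈ Finset.range (m + 1), ((k : ℝ) + s - ((m:ℝ)+1) * x) ^ 2 * bp m k x
      = ∑ k ∈ Finset.range (m + 1),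
          (((k : ℝ) - m * x) ^ 2 * bp m k x
            + (2 * (s - x) * (((k : ℝ) - m * x) * bp m k x)
            + (s - x) ^ 2 * bp m k x)) :=
        Finset.sum_congr rfl fun k _ => by ring
    _ = (∑ k ∈ Finset.range (m + 1), ((k : ℝ) - m * x) ^ 2 * bp m k x)
          + (2 * (s - x) * (∑ k ∈ Finset.range (m + 1), ((k : ℝ) - m * x) * bp m k x)
          + (s - x) ^ 2 * ∑ k ∈ Finset.range (m + 1), bp m k x) := by
        rw [Finset.sum_add_distrib, Finset.sum_add_distrib, Finset.mul_sum, Finset.mul_sum]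
    _ = (m:ℝ) * x * (1 - x) + (s - x) ^ 2 := by
        rw [mom1 m hm, mom2 m hm, sum_bp]; ring

lemma moms4 (m : ℕ) (hm : 4 ≤ m) {x : ℝ} (hx : x ∈ Icc (0:ℝ) 1) {s : ℝ}
    (hs : 0 ≤ s) (hs1 : s ≤ 1) :
    ∑ k ∈ Finset.range (m + 1), ((k : ℝ) + s - ((m:ℝ)+1) * x) ^ 4 * bp m k x
      ≤ 9 * (m:ℝ) ^ 2 := by
  obtain ⟨h0, h1⟩ := hx
  have step1 : ∑ k ∈ Finset.range (m + 1), ((k : ℝ) + s - ((m:ℝ)+1) * x) ^ 4 * bp m k x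
      ≤ ∑ k ∈ Finset.range (m + 1),
          (8 * (((k : ℝ) - m * x) ^ 4 * bp m k x) + 8 * bp m k x) := by
    apply Finset.sum_le_sum
    intro k _
    have hb := bp_nonneg m k ⟨h0, h1⟩
    have key : ((k : ℝ) + s - ((m:ℝ)+1) * x) ^ 4 ≤ 8 * ((k : ℝ) - m * x) ^ 4 + 8 := by
      set A : ℝ := (k : ℝ) - m * x
      set b : ℝ := s - x
      have hb1 : b ^ 2 ≤ 1 := by
        have : |b| ≤ 1 := abs_le.2 ⟨by simp [b]; linarith, by simp [b]; linarith⟩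
        nlinarith [this, abs_nonneg b, sq_abs b]
      have h8 : (A + b) ^ 4 ≤ 8 * A ^ 4 + 8 * b ^ 4 := by
        nlinarith [sq_nonneg (A - b), sq_nonneg (A + b), sq_nonneg (A^2 - b^2),
          sq_nonneg (A*b), sq_nonneg ((A+b)^2 - 2*A^2 - 2*b^2), sq_nonneg (A^2 + b^2)]
      have : ((k : ℝ) + s - ((m:ℝ)+1) * x) = A + b := by simp [A, b]; ring
      rw [this]
      nlinarith [h8, sq_nonneg b, hb1]
    nlinarith [key, hb]
  have step2 : ∑ k ∈ Finset.range (m + 1),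
      (8 * (((k : ℝ) - m * x) ^ 4 * bp m k x) + 8 * bp m k x)
      = 8 * ((m:ℝ) * x * (1 - x) * (1 + 3 * ((m : ℝ) - 2) * x * (1 - x))) + 8 := by
    rw [Finset.sum_add_distrib, ← Finset.mul_sum, ← Finset.mul_sum, mom4 m hm, sum_bp, mul_one]
  have hm' : (4:ℝ) ≤ (m:ℝ) := by exact_mod_cast hm
  have hxq : x * (1 - x) ≤ 1/4 := by nlinarith [sq_nonneg (x - 1/2)]
  have hxq0 : 0 ≤ x * (1 - x) := by nlinarith
  calc ∑ k ∈ Finset.range (m + 1), ((k : ℝ) + s - ((m:ℝ)+1) * x) ^ 4 * bp m k x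
      ≤ 8 * ((m:ℝ) * x * (1 - x) * (1 + 3 * ((m : ℝ) - 2) * x * (1 - x))) + 8 := by
        rw [← step2]; exact step1
    _ ≤ 9 * (m:ℝ) ^ 2 := by
        have hmm : (0:ℝ) ≤ (m:ℝ) * ((m:ℝ) - 2) := by nlinarith
        have k1 : (0:ℝ) ≤ (1/4 - x*(1-x)) * ((m:ℝ) * ((m:ℝ) - 2)) :=
          mul_nonneg (by linarith) hmm
        have k2 : (0:ℝ) ≤ (x*(1-x)) * (1/4 - x*(1-x)) * ((m:ℝ) * ((m:ℝ) - 2)) :=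
          mul_nonneg (mul_nonneg hxq0 (by linarith)) hmm
        have k3 : (0:ℝ) ≤ (1/4 - x*(1-x)) * (m:ℝ) := mul_nonneg (by linarith) (by linarith)
        nlinarith [k1, k2, k3, hm']

lemma BernM1_eq (a0 a1 : ℝ) (m : ℕ) (x : ℝ) (f : ℝ → ℝ) :
    BernM1 a0 a1 (m+1) f x
      = (a1*x+a0) * ∑ k ∈ Finset.range (m+1), bp m k x * f (k/(m+1))
        + (a1*(1-x)+a0) * ∑ k ∈ Finset.range (m+1), bp m k x * f ((k+1)/(m+1)) := by
  unfold BernM1 bpM1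
  simp only [Nat.add_sub_cancel]
  rw [show ∀ S : Finset ℕ, ∀ g : ℕ → ℝ,
      ∑ k ∈ S, ((a1 * x + a0) * bp m k x + (a1 * (1 - x) + a0) * bpz m ((k : ℤ) - 1) x) * g k
      = ∑ k ∈ S, ((a1 * x + a0) * (bp m k x * g k))
        + ∑ k ∈ S, ((a1 * (1 - x) + a0) * (bpz m ((k : ℤ) - 1) x * g k)) from
    fun S g => by rw [← Finset.sum_add_distrib]; exact Finset.sum_congr rfl fun k _ => by ring]
  rw [← Finset.mul_sum, ← Finset.mul_sum]
  congr 1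
  · congr 1
    rw [Finset.sum_range_succ]
    have : bp m (m+1) x = 0 := by
      unfold bp
      rw [Nat.choose_eq_zero_of_lt (by omega)]
      simp
    rw [this]
    simp
  · congr 1
    rw [Finset.sum_range_succ']
    have h0 : bpz m (((0:ℕ) : ℤ) - 1) x = 0 := by
      unfold bpz; norm_num
    rw [h0, zero_mul, add_zero]
    apply Finset.sum_congr rfl
    intro i _
    have h1 : ((((i+1:ℕ)) : ℤ) - 1) = (i : ℤ) := by push_cast; ring
    rw [h1]
    have h2 : bpz m (i : ℤ) x = bp m i x := by
      unfold bpz; simp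
    rw [h2]
    congr 1
    push_cast
    ring

lemma sum_taylor (m : ℕ) (hm : 4 ≤ m) (x s : ℝ) (g : ℝ → ℝ) (A B C : ℝ) :
    ∑ k ∈ Finset.range (m+1), bp m k x * g (((k:ℝ)+s)/((m:ℝ)+1))
      = A + B * ((s-x)/((m:ℝ)+1)) + C * (((m:ℝ)*x*(1-x) + (s-x)^2)/((m:ℝ)+1)^2)
        + ∑ k ∈ Finset.range (m+1), bp m k x *
            (g (((k:ℝ)+s)/((m:ℝ)+1)) - A - B*(((k:ℝ)+s)/((m:ℝ)+1)-x)
              - C*(((k:ℝ)+s)/((m:ℝ)+1)-x)^2) := by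
  have hN : ((m:ℝ)+1) ≠ 0 := by positivity
  have point : ∀ k : ℕ, bp m k x * g (((k:ℝ)+s)/((m:ℝ)+1))
      = A * bp m k x
        + ((B/((m:ℝ)+1)) * (((k:ℝ) + s - ((m:ℝ)+1) * x) * bp m k x)
        + ((C/((m:ℝ)+1)^2) * (((k:ℝ) + s - ((m:ℝ)+1) * x) ^ 2 * bp m k x)
        + bp m k x * (g (((k:ℝ)+s)/((m:ℝ)+1)) - A - B*(((k:ℝ)+s)/((m:ℝ)+1)-x)
              - C*(((k:ℝ)+s)/((m:ℝ)+1)-x)^2))) := by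
    intro k
    field_simp
    ring
  rw [Finset.sum_congr rfl (fun k _ => point k)]
  rw [Finset.sum_add_distrib, Finset.sum_add_distrib, Finset.sum_add_distrib,
    ← Finset.mul_sum, ← Finset.mul_sum, ← Finset.mul_sum,
    sum_bp, moms1 m hm, moms2 m hm]
  field_simp
  ring

lemma taylor_est (f f' f'' : ℝ → ℝ)
    (hf : ∀ t ∈ Icc (0:ℝ) 1, HasDerivWithinAt f (f' t) (Icc 0 1) t)
    (hf' : ∀ t ∈ Icc (0:ℝ) 1, HasDerivWithinAt f' (f'' t) (Icc 0 1) t)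
    (x : ℝ) (hx : x ∈ Icc (0:ℝ) 1) {ε : ℝ} (hε : 0 < ε) :
    ∃ δ > 0, ∀ t ∈ Icc (0:ℝ) 1, |t - x| ≤ δ →
      |f t - f x - f' x * (t-x) - f'' x/2 * (t-x)^2| ≤ ε * (t-x)^2 := by
  have hlo := (hasDerivWithinAt_iff_isLittleO.1 (hf' x hx)).def hε
  rw [Filter.Eventually, Metric.mem_nhdsWithin_iff] at hlo
  obtain ⟨δ', hδ', hball⟩ := hlo
  refine ⟨δ'/2, by positivity, ?_⟩
  intro t ht hdist
  have hg : ∀ u ∈ Icc (0:ℝ) 1, dist u x < δ' →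
      |f' u - f' x - (u - x) * f'' x| ≤ ε * |u - x| := by
    intro u hu hd
    have : u ∈ Metric.ball x δ' ∩ Icc (0:ℝ) 1 := ⟨hd, hu⟩
    have := hball this
    simpa [Real.norm_eq_abs] using this
  -- MVT on the set S
  set S : Set ℝ := Icc (0:ℝ) 1 ∩ Icc (x - |t - x|) (x + |t - x|) with hS
  have hconv : Convex ℝ S := (convex_Icc _ _).inter (convex_Icc _ _)
  have hxS : x ∈ S := ⟨hx, by constructor <;> [linarith [abs_nonneg (t-x)]; linarith [abs_nonneg (t-x)]]⟩
  have htS : t ∈ S := ⟨ht, by constructor <;> [linarith [neg_abs_le (t-x)]; linarith [le_abs_self (t-x)]]⟩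
  set R : ℝ → ℝ := fun u => f u - f x - f' x * (u-x) - f'' x/2 * (u-x)^2 with hRdef
  have hRderiv : ∀ u ∈ S, HasDerivWithinAt R (f' u - f' x - (u - x) * f'' x) S u := by
    intro u hu
    have h1 : HasDerivWithinAt f (f' u) S u := (hf u hu.1).mono inter_subset_left
    have h2 : HasDerivWithinAt (fun v => f x + f' x * (v-x) + f'' x/2 * (v-x)^2)
        (f' x + f'' x * (u - x)) S u := by
      have : HasDerivAt (fun v => f x + f' x * (v-x) + f'' x/2 * (v-x)^2)
          (f' x + f'' x * (u - x)) u := by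
        have hv : HasDerivAt (fun v : ℝ => v) 1 u := hasDerivAt_id u
        have := (((hv.sub_const x).const_mul (f' x)).const_add (f x)).add
          (((hv.sub_const x).pow 2).const_mul (f'' x / 2))
        exact this.congr_deriv (by ring)
      exact this.hasDerivWithinAt
    have := h1.sub h2
    refine (this.congr_deriv (by ring)).congr_of_mem (fun v _ => by simp only [hRdef, Pi.sub_apply]; ring) hu
  have hbound : ∀ u ∈ S, ‖f' u - f' x - (u - x) * f'' x‖ ≤ ε * |t - x| := by
    intro u hu
    have hd : dist u x < δ' := by
      rw [Real.dist_eq]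
      have h1 : |u - x| ≤ |t - x| := by
        obtain ⟨_, hu2⟩ := hu
        rw [abs_le]
        constructor <;> [linarith [hu2.1]; linarith [hu2.2]]
      linarith
    have := hg u hu.1 hd
    rw [Real.norm_eq_abs]
    calc |f' u - f' x - (u - x) * f'' x| ≤ ε * |u - x| := this
      _ ≤ ε * |t - x| := by
        apply mul_le_mul_of_nonneg_left _ hε.le
        obtain ⟨_, hu2⟩ := hu
        rw [abs_le]
        constructor <;> [linarith [hu2.1]; linarith [hu2.2]]
  have key := hconv.norm_image_sub_le_of_norm_hasDerivWithin_le hRderiv hbound hxS htS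
  have hRx : R x = 0 := by simp [hRdef]
  rw [hRx, sub_zero, Real.norm_eq_abs, Real.norm_eq_abs] at key
  calc |f t - f x - f' x * (t-x) - f'' x/2 * (t-x)^2| = |R t| := rfl
    _ ≤ ε * |t - x| * |t - x| := key
    _ = ε * (t - x)^2 := by rw [mul_assoc, ← abs_mul, ← sq, abs_sq]

lemma sum_abs_bound (m : ℕ) (hm : 4 ≤ m) {x : ℝ} (hx : x ∈ Icc (0:ℝ) 1) {s : ℝ}
    (hs0 : 0 ≤ s) (hs1 : s ≤ 1) (r : ℝ → ℝ) {ε' Mb δ : ℝ} (hδ : 0 < δ)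
    (hε' : 0 ≤ ε') (hMb : 0 ≤ Mb)
    (hr : ∀ t ∈ Icc (0:ℝ) 1, |r t| ≤ ε' * (t-x)^2 + (Mb/δ^4) * (t-x)^4) :
    |∑ k ∈ Finset.range (m+1), bp m k x * r (((k:ℝ)+s)/((m:ℝ)+1))|
      ≤ ε' * (((m:ℝ)*x*(1-x) + (s-x)^2)/((m:ℝ)+1)^2)
        + (Mb/δ^4) * (9*(m:ℝ)^2/((m:ℝ)+1)^4) := by
  have hN : (0:ℝ) < (m:ℝ)+1 := by positivity
  have hmem : ∀ k ∈ Finset.range (m+1), ((k:ℝ)+s)/((m:ℝ)+1) ∈ Icc (0:ℝ) 1 := by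
    intro k hk
    simp only [Finset.mem_range] at hk
    have hk' : (k:ℝ) ≤ m := by exact_mod_cast Nat.lt_succ_iff.1 hk
    constructor
    · positivity
    · rw [div_le_one hN]; linarith
  have harg : ∀ k : ℕ, ((k:ℝ)+s)/((m:ℝ)+1) - x = ((k:ℝ) + s - ((m:ℝ)+1)*x)/((m:ℝ)+1) := by
    intro k; field_simp
  calc |∑ k ∈ Finset.range (m+1), bp m k x * r (((k:ℝ)+s)/((m:ℝ)+1))|
      ≤ ∑ k ∈ Finset.range (m+1), |bp m k x * r (((k:ℝ)+s)/((m:ℝ)+1))| :=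
        Finset.abs_sum_le_sum_abs _ _
    _ ≤ ∑ k ∈ Finset.range (m+1),
        (ε' * (((k:ℝ) + s - ((m:ℝ)+1)*x)^2 * bp m k x) / ((m:ℝ)+1)^2
          + (Mb/δ^4) * (((k:ℝ) + s - ((m:ℝ)+1)*x)^4 * bp m k x) / ((m:ℝ)+1)^4) := by
        apply Finset.sum_le_sum
        intro k hk
        have hb := bp_nonneg m k hx
        rw [abs_mul, abs_of_nonneg hb]
        have h1 := hr _ (hmem k hk)
        have h2 : bp m k x * |r (((k:ℝ)+s)/((m:ℝ)+1))|
            ≤ bp m k x * (ε' * ((((k:ℝ)+s)/((m:ℝ)+1))-x)^2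
              + (Mb/δ^4) * ((((k:ℝ)+s)/((m:ℝ)+1))-x)^4) :=
          mul_le_mul_of_nonneg_left h1 hb
        calc bp m k x * |r (((k:ℝ)+s)/((m:ℝ)+1))|
            ≤ bp m k x * (ε' * ((((k:ℝ)+s)/((m:ℝ)+1))-x)^2
              + (Mb/δ^4) * ((((k:ℝ)+s)/((m:ℝ)+1))-x)^4) := h2
          _ = ε' * (((k:ℝ) + s - ((m:ℝ)+1)*x)^2 * bp m k x) / ((m:ℝ)+1)^2
              + (Mb/δ^4) * (((k:ℝ) + s - ((m:ℝ)+1)*x)^4 * bp m k x) / ((m:ℝ)+1)^4 := by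
            rw [harg k]
            field_simp
    _ = ε' * ((∑ k ∈ Finset.range (m+1), ((k:ℝ) + s - ((m:ℝ)+1)*x)^2 * bp m k x) / ((m:ℝ)+1)^2)
        + (Mb/δ^4) * ((∑ k ∈ Finset.range (m+1), ((k:ℝ) + s - ((m:ℝ)+1)*x)^4 * bp m k x) / ((m:ℝ)+1)^4) := by
        rw [Finset.sum_add_distrib]
        congr 1
        · rw [Finset.sum_div, Finset.mul_sum]
          exact Finset.sum_congr rfl fun k _ => by ring
        · rw [Finset.sum_div, Finset.mul_sum]
          exact Finset.sum_congr rfl fun k _ => by ring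
    _ ≤ ε' * (((m:ℝ)*x*(1-x) + (s-x)^2)/((m:ℝ)+1)^2)
        + (Mb/δ^4) * (9*(m:ℝ)^2/((m:ℝ)+1)^4) := by
        rw [moms2 m hm]
        have h4 := moms4 m hm hx hs0 hs1
        have hc : (0:ℝ) ≤ Mb/δ^4 := by positivity
        have h5 : (∑ k ∈ Finset.range (m+1), ((k:ℝ) + s - ((m:ℝ)+1)*x)^4 * bp m k x) / ((m:ℝ)+1)^4
            ≤ 9*(m:ℝ)^2/((m:ℝ)+1)^4 := by gcongr
        nlinarith [mul_le_mul_of_nonneg_left h5 hc]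

set_option maxHeartbeats 1600000 in
/-- Voronovskaya-type limit for `B_n^{M,1}`. -/
theorem stmt2 (a0 a1 : ℕ → ℝ) (ha : ∀ m, 2 * a0 m + a1 m = 1) (L1 : ℝ)
    (hL : Tendsto a1 atTop (nhds L1))
    (f f' f'' : ℝ → ℝ)
    (hf : ∀ t ∈ Icc (0:ℝ) 1, HasDerivWithinAt f (f' t) (Icc 0 1) t)
    (hf' : ∀ t ∈ Icc (0:ℝ) 1, HasDerivWithinAt f' (f'' t) (Icc 0 1) t)
    (hf'' : ContinuousOn f'' (Icc 0 1))
    (x : ℝ) (hx : x ∈ Icc (0:ℝ) 1) :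
    Tendsto (fun n : ℕ => (n : ℝ) * (BernM1 (a0 n) (a1 n) n f x - f x)) atTop
      (nhds (x * (1 - x) / 2 * f'' x + (1 - 2 * x) / 2 * (1 + L1) * f' x)) := by
  obtain ⟨hx0, hx1⟩ := hx
  have hxI : x ∈ Icc (0:ℝ) 1 := ⟨hx0, hx1⟩
  -- STEP A : eventual decomposition
  have key : (fun n : ℕ => (n : ℝ) * (BernM1 (a0 n) (a1 n) n f x - f x)) =ᶠ[atTop]
      (fun n : ℕ => (f' x * ((1-2*x)*(1+a1 n)/2)
        + (f'' x/2 * ((1 - 1/(n:ℝ)) * (x*(1-x)))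
        + f'' x/2 * (((a1 n * x + a0 n) * x^2 + (a1 n * (1-x) + a0 n) * (1-x)^2) * (1/(n:ℝ)))))
      + ((n:ℝ) * ((a1 n * x + a0 n)
          * (∑ k ∈ Finset.range n, bp (n-1) k x * (f ((k:ℝ)/(n:ℝ)) - f x - f' x * ((k:ℝ)/(n:ℝ) - x) - f'' x/2 * ((k:ℝ)/(n:ℝ) - x)^2))
        + (a1 n * (1-x) + a0 n)
          * (∑ k ∈ Finset.range n, bp (n-1) k x * (f (((k:ℝ)+1)/(n:ℝ)) - f x - f' x * (((k:ℝ)+1)/(n:ℝ) - x) - f'' x/2 * (((k:ℝ)+1)/(n:ℝ) - x)^2))))) := by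
    filter_upwards [eventually_ge_atTop 5] with n hn
    obtain ⟨m, rfl⟩ : ∃ m, n = m + 1 := ⟨n - 1, by omega⟩
    have hm : 4 ≤ m := by omega
    have hN : ((m:ℝ)+1) ≠ 0 := by positivity
    rw [BernM1_eq]
    have hs0 := sum_taylor m hm x 0 f (f x) (f' x) (f'' x / 2)
    have hs1 := sum_taylor m hm x 1 f (f x) (f' x) (f'' x / 2)
    simp only [add_zero] at hs0
    rw [hs0, hs1]
    have h0 : a0 (m+1) = (1 - a1 (m+1))/2 := by have := ha (m+1); linarith
    rw [h0]
    simp only [Nat.add_sub_cancel, Nat.cast_add, Nat.cast_one]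
    field_simp
    ring
  -- STEP B : main term limit
  have h1n : Tendsto (fun n : ℕ => 1/(n:ℝ)) atTop (nhds 0) :=
    tendsto_one_div_atTop_nhds_zero_nat
  have ha0 : Tendsto a0 atTop (nhds ((1 - L1)/2)) := by
    have h : Tendsto (fun n : ℕ => (1 - a1 n)/2) atTop (nhds ((1 - L1)/2)) :=
      (tendsto_const_nhds.sub hL).div_const 2
    exact h.congr (fun n => by have := ha n; linarith)
  have t1 : Tendsto (fun n : ℕ => f' x * ((1-2*x)*(1+a1 n)/2)) atTop
      (nhds (f' x * ((1-2*x)*(1+L1)/2))) :=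
    tendsto_const_nhds.mul ((tendsto_const_nhds.mul (tendsto_const_nhds.add hL)).div_const 2)
  have t2 : Tendsto (fun n : ℕ => f'' x/2 * ((1 - 1/(n:ℝ)) * (x*(1-x)))) atTop
      (nhds (f'' x/2 * ((1 - 0) * (x*(1-x))))) :=
    tendsto_const_nhds.mul ((tendsto_const_nhds.sub h1n).mul tendsto_const_nhds)
  have t3 : Tendsto (fun n : ℕ => f'' x/2 *
      (((a1 n * x + a0 n) * x^2 + (a1 n * (1-x) + a0 n) * (1-x)^2) * (1/(n:ℝ)))) atTop
      (nhds (f'' x/2 * (((L1 * x + (1 - L1)/2) * x^2 + (L1 * (1-x) + (1 - L1)/2) * (1-x)^2) * 0))) :=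
    tendsto_const_nhds.mul
      ((((hL.mul_const x).add ha0).mul_const (x^2)).add
        (((hL.mul_const (1-x)).add ha0).mul_const ((1-x)^2)) |>.mul h1n)
  have hM := t1.add (t2.add t3)
  -- STEP C : remainder tends to zero
  have hT : Tendsto (fun n : ℕ => (n:ℝ) * ((a1 n * x + a0 n)
          * (∑ k ∈ Finset.range n, bp (n-1) k x * (f ((k:ℝ)/(n:ℝ)) - f x - f' x * ((k:ℝ)/(n:ℝ) - x) - f'' x/2 * ((k:ℝ)/(n:ℝ) - x)^2))
        + (a1 n * (1-x) + a0 n)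
          * (∑ k ∈ Finset.range n, bp (n-1) k x * (f (((k:ℝ)+1)/(n:ℝ)) - f x - f' x * (((k:ℝ)+1)/(n:ℝ) - x) - f'' x/2 * (((k:ℝ)+1)/(n:ℝ) - x)^2))))
      atTop (nhds 0) := by
    rw [NormedAddCommGroup.tendsto_nhds_zero]
    intro ε hε
    set A : ℝ := 2*|L1| + 4 with hAdef
    have hApos : 0 < A := by positivity
    set ε' : ℝ := ε / (8*A) with hε'def
    have hε'pos : 0 < ε' := by positivity
    obtain ⟨δ, hδpos, hδ⟩ := taylor_est f f' f'' hf hf' x hxI hε'pos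
    have hrc : ContinuousOn (fun t => f t - f x - f' x * (t - x) - f'' x/2 * (t-x)^2)
        (Icc (0:ℝ) 1) := by
      have hfc : ContinuousOn f (Icc (0:ℝ) 1) := fun t ht => (hf t ht).continuousWithinAt
      exact ((hfc.sub continuousOn_const).sub
        (continuousOn_const.mul (continuousOn_id.sub continuousOn_const))).sub
        (continuousOn_const.mul ((continuousOn_id.sub continuousOn_const).pow 2))
    obtain ⟨Mb, hMball⟩ := isCompact_Icc.exists_bound_of_continuousOn hrc
    have hMb0 : 0 ≤ Mb := le_trans (norm_nonneg _) (hMball 0 ⟨le_refl 0, zero_le_one⟩)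
    have hr : ∀ t ∈ Icc (0:ℝ) 1, |f t - f x - f' x * (t - x) - f'' x/2 * (t-x)^2|
        ≤ ε' * (t-x)^2 + (Mb/δ^4) * (t-x)^4 := by
      intro t ht
      rcases le_or_gt |t - x| δ with h | h
      · have h1 := hδ t ht h
        have h2 : 0 ≤ (Mb/δ^4) * (t-x)^4 := by positivity
        linarith
      · have h1 : |f t - f x - f' x * (t - x) - f'' x/2 * (t-x)^2| ≤ Mb := by
          have := hMball t ht; rwa [Real.norm_eq_abs] at this
        have h2 : δ^4 ≤ (t-x)^4 := by
          calc δ^4 ≤ |t-x|^4 := pow_le_pow_left₀ hδpos.le h.le 4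
            _ = (t-x)^4 := by rw [← abs_pow, abs_of_nonneg (by positivity : (0:ℝ) ≤ (t-x)^4)]
        have h3 : Mb ≤ (Mb/δ^4) * (t-x)^4 := by
          rw [div_mul_eq_mul_div, le_div_iff₀ (by positivity)]
          nlinarith [hMb0, h2]
        have h4 : 0 ≤ ε' * (t-x)^2 := by positivity
        linarith
    obtain ⟨N1, hN1⟩ := exists_nat_gt (9*(Mb/δ^4)/ε')
    have hA1 : ∀ᶠ n in atTop, |a1 n| ≤ |L1| + 1 := by
      have hev : ∀ᶠ y in nhds L1, y ∈ Metric.closedBall L1 1 :=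
        eventually_of_mem (Metric.closedBall_mem_nhds L1 one_pos) (fun y hy => hy)
      filter_upwards [hL.eventually hev] with n hn
      have : |a1 n - L1| ≤ 1 := by
        have := hn; rw [Metric.mem_closedBall, Real.dist_eq] at this; exact this
      calc |a1 n| = |(a1 n - L1) + L1| := by ring_nf
        _ ≤ |a1 n - L1| + |L1| := abs_add_le _ _
        _ ≤ |L1| + 1 := by linarith
    filter_upwards [eventually_ge_atTop 5, eventually_ge_atTop (N1+1), hA1] with n hn5 hnN ha1b
    obtain ⟨m, rfl⟩ : ∃ m, n = m + 1 := ⟨n - 1, by omega⟩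
    have hm : 4 ≤ m := by omega
    have hp : (0:ℝ) < (m:ℝ)+1 := by positivity
    -- coefficient bounds
    have h00 : a0 (m+1) = (1 - a1 (m+1))/2 := by have := ha (m+1); linarith
    have ha0b : |a0 (m+1)| ≤ (1 + |L1| + 1)/2 := by
      rw [h00, abs_div, abs_of_pos (by norm_num : (0:ℝ) < 2)]
      have : |1 - a1 (m+1)| ≤ 1 + |a1 (m+1)| := by
        calc |1 - a1 (m+1)| = |1 + -(a1 (m+1))| := by ring_nf
          _ ≤ |(1:ℝ)| + |-(a1 (m+1))| := abs_add_le _ _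
          _ = 1 + |a1 (m+1)| := by rw [abs_one, abs_neg]
      linarith
    have hax : |a1 (m+1) * x + a0 (m+1)| ≤ A := by
      calc |a1 (m+1) * x + a0 (m+1)| ≤ |a1 (m+1) * x| + |a0 (m+1)| := abs_add_le _ _
        _ = |a1 (m+1)| * |x| + |a0 (m+1)| := by rw [abs_mul]
        _ ≤ A := by
          have hxabs : |x| ≤ 1 := abs_le.2 ⟨by linarith, hx1⟩
          have h1 : |a1 (m+1)| * |x| ≤ |a1 (m+1)| * 1 :=
            mul_le_mul_of_nonneg_left hxabs (abs_nonneg _)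
          rw [hAdef]; nlinarith [ha1b, ha0b, abs_nonneg (a1 (m+1))]
    have hbx : |a1 (m+1) * (1-x) + a0 (m+1)| ≤ A := by
      calc |a1 (m+1) * (1-x) + a0 (m+1)| ≤ |a1 (m+1) * (1-x)| + |a0 (m+1)| := abs_add_le _ _
        _ = |a1 (m+1)| * |1-x| + |a0 (m+1)| := by rw [abs_mul]
        _ ≤ A := by
          have hxabs : |1-x| ≤ 1 := abs_le.2 ⟨by linarith, by linarith⟩
          have h1 : |a1 (m+1)| * |1-x| ≤ |a1 (m+1)| * 1 :=
            mul_le_mul_of_nonneg_left hxabs (abs_nonneg _)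
          rw [hAdef]; nlinarith [ha1b, ha0b, abs_nonneg (a1 (m+1))]
    -- sum bounds
    have hb0 := sum_abs_bound m hm hxI le_rfl zero_le_one
      (fun t => f t - f x - f' x * (t - x) - f'' x/2 * (t-x)^2) hδpos hε'pos.le hMb0 hr
    have hb1 := sum_abs_bound m hm hxI zero_le_one le_rfl
      (fun t => f t - f x - f' x * (t - x) - f'' x/2 * (t-x)^2) hδpos hε'pos.le hMb0 hr
    simp only [add_zero] at hb0
    -- arithmetic on the bounds
    have hxq : x*(1-x) ≤ 1/4 := by nlinarith [sq_nonneg (x - 1/2)]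
    have hmxq : (m:ℝ)*x*(1-x) ≤ ((m:ℝ)+1)/4 := by
      have h1 : (m:ℝ)*(x*(1-x)) ≤ (m:ℝ)*(1/4) :=
        mul_le_mul_of_nonneg_left hxq (by positivity)
      nlinarith
    have c0 : ((m:ℝ)+1) * (ε' * (((m:ℝ)*x*(1-x) + (0-x)^2)/((m:ℝ)+1)^2)
        + (Mb/δ^4) * (9*(m:ℝ)^2/((m:ℝ)+1)^4)) ≤ 2*ε' := by
      have s1 : ((m:ℝ)*x*(1-x) + (0-x)^2)/((m:ℝ)+1) ≤ 1 := by
        rw [div_le_one hp]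
        nlinarith [hmxq, sq_nonneg x, hx0, hx1]
      have s2 : (m:ℝ)^2/((m:ℝ)+1)^3 ≤ 1/((m:ℝ)+1) := by
        rw [div_le_div_iff₀ (by positivity) hp]
        nlinarith [hp]
      have s3 : 9*(Mb/δ^4)/((m:ℝ)+1) ≤ ε' := by
        rw [div_lt_iff₀ hε'pos] at hN1
        rw [div_le_iff₀ hp]
        have hc : (N1:ℝ) + 1 ≤ (m:ℝ)+1 := by
          have : (N1+1 : ℕ) ≤ m+1 := hnN
          exact_mod_cast this
        nlinarith [hN1, hc, hε'pos]
      have e1 : ((m:ℝ)+1) * (ε' * (((m:ℝ)*x*(1-x) + (0-x)^2)/((m:ℝ)+1)^2)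
          + (Mb/δ^4) * (9*(m:ℝ)^2/((m:ℝ)+1)^4))
          = ε' * (((m:ℝ)*x*(1-x) + (0-x)^2)/((m:ℝ)+1))
            + 9*(Mb/δ^4) * ((m:ℝ)^2/((m:ℝ)+1)^3) := by
        field_simp
      rw [e1]
      have t1 : ε' * (((m:ℝ)*x*(1-x) + (0-x)^2)/((m:ℝ)+1)) ≤ ε' * 1 :=
        mul_le_mul_of_nonneg_left s1 hε'pos.le
      have t2 : 9*(Mb/δ^4) * ((m:ℝ)^2/((m:ℝ)+1)^3) ≤ 9*(Mb/δ^4) * (1/((m:ℝ)+1)) :=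
        mul_le_mul_of_nonneg_left s2 (by positivity)
      have t3 : 9*(Mb/δ^4) * (1/((m:ℝ)+1)) = 9*(Mb/δ^4)/((m:ℝ)+1) := by ring
      linarith
    have c1 : ((m:ℝ)+1) * (ε' * (((m:ℝ)*x*(1-x) + (1-x)^2)/((m:ℝ)+1)^2)
        + (Mb/δ^4) * (9*(m:ℝ)^2/((m:ℝ)+1)^4)) ≤ 2*ε' := by
      have s1 : ((m:ℝ)*x*(1-x) + (1-x)^2)/((m:ℝ)+1) ≤ 1 := by
        rw [div_le_one hp]
        nlinarith [hmxq, sq_nonneg (1-x), hx0, hx1]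
      have s2 : (m:ℝ)^2/((m:ℝ)+1)^3 ≤ 1/((m:ℝ)+1) := by
        rw [div_le_div_iff₀ (by positivity) hp]
        nlinarith [hp]
      have s3 : 9*(Mb/δ^4)/((m:ℝ)+1) ≤ ε' := by
        rw [div_lt_iff₀ hε'pos] at hN1
        rw [div_le_iff₀ hp]
        have hc : (N1:ℝ) + 1 ≤ (m:ℝ)+1 := by
          have : (N1+1 : ℕ) ≤ m+1 := hnN
          exact_mod_cast this
        nlinarith [hN1, hc, hε'pos]
      have e1 : ((m:ℝ)+1) * (ε' * (((m:ℝ)*x*(1-x) + (1-x)^2)/((m:ℝ)+1)^2)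
          + (Mb/δ^4) * (9*(m:ℝ)^2/((m:ℝ)+1)^4))
          = ε' * (((m:ℝ)*x*(1-x) + (1-x)^2)/((m:ℝ)+1))
            + 9*(Mb/δ^4) * ((m:ℝ)^2/((m:ℝ)+1)^3) := by
        field_simp
      rw [e1]
      have t1 : ε' * (((m:ℝ)*x*(1-x) + (1-x)^2)/((m:ℝ)+1)) ≤ ε' * 1 :=
        mul_le_mul_of_nonneg_left s1 hε'pos.le
      have t2 : 9*(Mb/δ^4) * ((m:ℝ)^2/((m:ℝ)+1)^3) ≤ 9*(Mb/δ^4) * (1/((m:ℝ)+1)) :=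
        mul_le_mul_of_nonneg_left s2 (by positivity)
      have t3 : 9*(Mb/δ^4) * (1/((m:ℝ)+1)) = 9*(Mb/δ^4)/((m:ℝ)+1) := by ring
      linarith
    -- final assembly
    rw [Real.norm_eq_abs]
    simp only [Nat.add_sub_cancel, Nat.cast_add, Nat.cast_one]
    set S0 := ∑ k ∈ Finset.range (m+1), bp m k x *
      (f ((k:ℝ)/((m:ℝ)+1)) - f x - f' x * ((k:ℝ)/((m:ℝ)+1) - x) - f'' x/2 * ((k:ℝ)/((m:ℝ)+1) - x)^2) with hS0def
    set S1 := ∑ k ∈ Finset.range (m+1), bp m k x *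
      (f (((k:ℝ)+1)/((m:ℝ)+1)) - f x - f' x * (((k:ℝ)+1)/((m:ℝ)+1) - x) - f'' x/2 * (((k:ℝ)+1)/((m:ℝ)+1) - x)^2) with hS1def
    have hS0 : |S0| ≤ ε' * (((m:ℝ)*x*(1-x) + (0-x)^2)/((m:ℝ)+1)^2)
        + (Mb/δ^4) * (9*(m:ℝ)^2/((m:ℝ)+1)^4) := hb0
    have hS1 : |S1| ≤ ε' * (((m:ℝ)*x*(1-x) + (1-x)^2)/((m:ℝ)+1)^2)
        + (Mb/δ^4) * (9*(m:ℝ)^2/((m:ℝ)+1)^4) := hb1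
    have habs : |((m:ℝ)+1) * ((a1 (m+1) * x + a0 (m+1)) * S0 + (a1 (m+1) * (1-x) + a0 (m+1)) * S1)|
        ≤ ((m:ℝ)+1) * (|a1 (m+1) * x + a0 (m+1)| * |S0| + |a1 (m+1) * (1-x) + a0 (m+1)| * |S1|) := by
      rw [abs_mul, abs_of_pos hp]
      apply mul_le_mul_of_nonneg_left _ hp.le
      calc |(a1 (m+1) * x + a0 (m+1)) * S0 + (a1 (m+1) * (1-x) + a0 (m+1)) * S1|
          ≤ |(a1 (m+1) * x + a0 (m+1)) * S0| + |(a1 (m+1) * (1-x) + a0 (m+1)) * S1| := abs_add_le _ _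
        _ = |a1 (m+1) * x + a0 (m+1)| * |S0| + |a1 (m+1) * (1-x) + a0 (m+1)| * |S1| := by
            rw [abs_mul, abs_mul]
    have step : ((m:ℝ)+1) * (|a1 (m+1) * x + a0 (m+1)| * |S0| + |a1 (m+1) * (1-x) + a0 (m+1)| * |S1|)
        ≤ A * (2*ε') + A * (2*ε') := by
      have u0 : |a1 (m+1) * x + a0 (m+1)| * |S0| ≤ A * (ε' * (((m:ℝ)*x*(1-x) + (0-x)^2)/((m:ℝ)+1)^2)
          + (Mb/δ^4) * (9*(m:ℝ)^2/((m:ℝ)+1)^4)) :=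
        mul_le_mul hax hS0 (abs_nonneg _) hApos.le
      have u1 : |a1 (m+1) * (1-x) + a0 (m+1)| * |S1| ≤ A * (ε' * (((m:ℝ)*x*(1-x) + (1-x)^2)/((m:ℝ)+1)^2)
          + (Mb/δ^4) * (9*(m:ℝ)^2/((m:ℝ)+1)^4)) :=
        mul_le_mul hbx hS1 (abs_nonneg _) hApos.le
      have w0 := mul_le_mul_of_nonneg_left c0 hApos.le
      have w1 := mul_le_mul_of_nonneg_left c1 hApos.le
      nlinarith [u0, u1, w0, w1, hp, hApos]
    have final : A * (2*ε') + A * (2*ε') = ε/2 := by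
      rw [hε'def]
      field_simp
      ring
    calc |((m:ℝ)+1) * ((a1 (m+1) * x + a0 (m+1)) * S0 + (a1 (m+1) * (1-x) + a0 (m+1)) * S1)|
        ≤ A * (2*ε') + A * (2*ε') := le_trans habs step
      _ = ε/2 := final
      _ < ε := by linarith

  have hsum := hM.add hT
  rw [add_zero] at hsum
  refine (Tendsto.congr' key.symm ?_)
  convert hsum using 2
  ring
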